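/- Let ε > 0 and let X₁, X₂, X₃, X₄ be independent random variables each distributed as Exp(ε). Then for all real numbers Δ_v, Δ_{uv}, Δ_∅ and every τ ≥ 0, P[X₁ + X₂ < X₃ + X₄ − Δ_v ∧ X₁ < X₃ − Δ_{uv} ∧ X₂ < X₄ − Δ_∅] ≤ e^{4τε} · P[X₁ + X₂ < X₃ + X₄ − Δ_v ∧ X₁ < X₃ − Δ_{uv} − τ ∧ X₂ < X₄ − Δ_∅ − τ]. -/

import Mathlib

open MeasureTheory ProbabilityTheory
open scoped ENNReal

/-- For independent `X₁, X₂, X₃, X₄ ∼ Exp(ε)`, all reals `Δ_v, Δ_{uv}, Δ_∅`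
and every `τ ≥ 0`,
`P[X₁+X₂ < X₃+X₄−Δ_v ∧ X₁ < X₃−Δ_{uv} ∧ X₂ < X₄−Δ_∅] ≤
 e^{4τε}·P[X₁+X₂ < X₃+X₄−Δ_v ∧ X₁ < X₃−Δ_{uv}−τ ∧ X₂ < X₄−Δ_∅−τ]`. -/
private lemma prod_mono_aux {α β : Type*} [MeasurableSpace α] [MeasurableSpace β]
    {μ₁ μ₂ : Measure α} {ν₁ ν₂ : Measure β} [SFinite ν₁] [SFinite ν₂]
    (hμ : μ₁ ≤ μ₂) (hν : ν₁ ≤ ν₂) : μ₁.prod ν₁ ≤ μ₂.prod ν₂ := by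
  rw [Measure.le_iff]
  intro s hs
  rw [Measure.prod_apply hs, Measure.prod_apply hs]
  calc ∫⁻ x, ν₁ (Prod.mk x ⁻¹' s) ∂μ₁
      ≤ ∫⁻ x, ν₂ (Prod.mk x ⁻¹' s) ∂μ₁ := lintegral_mono fun x => Measure.le_iff'.1 hν _
    _ ≤ ∫⁻ x, ν₂ (Prod.mk x ⁻¹' s) ∂μ₂ := lintegral_mono' hμ le_rfl

private lemma prod_smul_right_aux {α β : Type*} [MeasurableSpace α] [MeasurableSpace β]
    (μ : Measure α) (ν : Measure β) [SFinite ν] (d : ℝ≥0∞) (hd : d ≠ ⊤) :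
    μ.prod (d • ν) = d • μ.prod ν := by
  ext s hs
  rw [Measure.prod_apply hs, Measure.smul_apply, smul_eq_mul, Measure.prod_apply hs,
    ← lintegral_const_mul' _ _ hd]
  simp [mul_comm]

private lemma smul_prod_aux {α β : Type*} [MeasurableSpace α] [MeasurableSpace β]
    (μ : Measure α) (ν : Measure β) [SFinite ν] (c : ℝ≥0∞) :
    (c • μ).prod ν = c • μ.prod ν := by
  ext s hs
  rw [Measure.prod_apply hs, Measure.smul_apply, smul_eq_mul, Measure.prod_apply hs,
    lintegral_smul_measure, smul_eq_mul]

private lemma expMeasure_shift_le {ε : ℝ} (hε : 0 < ε) {τ : ℝ} (hτ : 0 ≤ τ) :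
    (expMeasure ε).map (fun x => x + τ) ≤
      (ENNReal.ofReal (Real.exp (τ * ε))) • expMeasure ε := by
  rw [Measure.le_iff]
  intro s hs
  have hexp : expMeasure ε = volume.withDensity (exponentialPDF ε) := rfl
  rw [Measure.map_apply (measurable_add_const τ) hs]
  rw [hexp, withDensity_apply _ (hs.preimage (measurable_add_const τ))]
  have mp : MeasurePreserving (fun x : ℝ => x + τ) volume volume :=
    measurePreserving_add_right volume τ
  have emb : MeasurableEmbedding (fun x : ℝ => x + τ) :=
    (MeasurableEquiv.addRight τ).measurableEmbedding
  have key : ∫⁻ x in (fun x : ℝ => x + τ) ⁻¹' s, exponentialPDF ε x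
      = ∫⁻ y in s, exponentialPDF ε (y - τ) := by
    have := mp.setLIntegral_comp_preimage_emb emb (fun y => exponentialPDF ε (y - τ)) s
    simpa using this
  rw [key]
  have hpt : ∀ y : ℝ, exponentialPDF ε (y - τ) ≤
      ENNReal.ofReal (Real.exp (τ * ε)) * exponentialPDF ε y := by
    intro y
    rcases lt_or_ge (y - τ) 0 with h | h
    · rw [exponentialPDF_of_neg h]; exact zero_le
    · have hy : 0 ≤ y := by linarith
      rw [exponentialPDF_of_nonneg h, exponentialPDF_of_nonneg hy,
        ← ENNReal.ofReal_mul (Real.exp_nonneg _)]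
      apply ENNReal.ofReal_le_ofReal
      rw [mul_comm (Real.exp (τ*ε)), mul_assoc]
      apply mul_le_mul_of_nonneg_left _ hε.le
      rw [← Real.exp_add]
      apply Real.exp_le_exp.2
      ring_nf
      linarith
  calc ∫⁻ y in s, exponentialPDF ε (y - τ)
      ≤ ∫⁻ y in s, ENNReal.ofReal (Real.exp (τ * ε)) * exponentialPDF ε y :=
        lintegral_mono fun y => hpt y
    _ = ENNReal.ofReal (Real.exp (τ * ε)) * ∫⁻ y in s, exponentialPDF ε y :=
        lintegral_const_mul' _ _ ENNReal.ofReal_ne_top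
    _ = (ENNReal.ofReal (Real.exp (τ * ε)) • expMeasure ε) s := by
        rw [Measure.smul_apply, smul_eq_mul, hexp, withDensity_apply _ hs]

theorem exp_four_vars_shift
    (Ω : Type) [MeasurableSpace Ω] (μ : Measure Ω) [IsProbabilityMeasure μ]
    (ε : ℝ) (hε : 0 < ε) (X : Fin 4 → Ω → ℝ) (hX : ∀ i, Measurable (X i))
    (hXd : ∀ i, μ.map (X i) = expMeasure ε)
    (hind : iIndepFun X μ)
    (Δv Δuv Δe τ : ℝ) (hτ : 0 ≤ τ) :
    μ {ω | X 0 ω + X 1 ω < X 2 ω + X 3 ω - Δv ∧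
           X 0 ω < X 2 ω - Δuv ∧ X 1 ω < X 3 ω - Δe} ≤
      ENNReal.ofReal (Real.exp (4 * τ * ε)) *
        μ {ω | X 0 ω + X 1 ω < X 2 ω + X 3 ω - Δv ∧
               X 0 ω < X 2 ω - Δuv - τ ∧ X 1 ω < X 3 ω - Δe - τ} := by
  haveI hPexp : IsProbabilityMeasure (expMeasure ε) := isProbabilityMeasure_expMeasure hε
  set c : ℝ≥0∞ := ENNReal.ofReal (Real.exp (τ * ε)) with hc
  have hcne : c ≠ ⊤ := ENNReal.ofReal_ne_top
  set ν : Measure ℝ := expMeasure ε with hν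
  set U : Ω → ℝ := fun ω => X 0 ω - X 2 ω with hUdef
  set V : Ω → ℝ := fun ω => X 1 ω - X 3 ω with hVdef
  have hU : Measurable U := (hX 0).sub (hX 2)
  have hV : Measurable V := (hX 1).sub (hX 3)
  set sub : ℝ × ℝ → ℝ := fun p => p.1 - p.2 with hsubdef
  have hsub : Measurable sub := measurable_fst.sub measurable_snd
  haveI : IsProbabilityMeasure ((expMeasure ε).map (fun x : ℝ => x + τ)) :=
    Measure.isProbabilityMeasure_map (measurable_add_const τ).aemeasurable
  -- laws of U and V
  have hpair : ∀ i j : Fin 4, i ≠ j →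
      μ.map (fun ω => (X i ω, X j ω)) = ν.prod ν := by
    intro i j hij
    have := (indepFun_iff_map_prod_eq_prod_map_map (hX i).aemeasurable
      (hX j).aemeasurable).1 (hind.indepFun hij)
    rw [this, hXd i, hXd j]
  have hρU : μ.map U = (ν.prod ν).map sub := by
    rw [← hpair 0 2 (by decide), Measure.map_map hsub ((hX 0).prodMk (hX 2))]
    rfl
  have hρV : μ.map V = (ν.prod ν).map sub := by
    rw [← hpair 1 3 (by decide), Measure.map_map hsub ((hX 1).prodMk (hX 3))]
    rfl
  -- shift bound for the law of a difference
  have hshift : ((ν.prod ν).map sub).map (fun x => x - τ) ≤ c • (ν.prod ν).map sub := by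
    rw [Measure.map_map (measurable_sub_const τ) hsub]
    have h1 : ((fun x => x - τ) ∘ sub) = sub ∘ (Prod.map id (fun x => x + τ)) := by
      ext p; simp [hsubdef]; ring
    rw [h1, ← Measure.map_map hsub (measurable_id.prodMap (measurable_add_const τ))]
    have h2 : (ν.prod ν).map (Prod.map id (fun x => x + τ))
        = ν.prod (ν.map (fun x => x + τ)) := by
      rw [← Measure.map_prod_map _ _ measurable_id (measurable_add_const τ),
        Measure.map_id]
    rw [h2]
    calc (ν.prod (ν.map (fun x => x + τ))).map sub
        ≤ (ν.prod (c • ν)).map sub :=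
          Measure.map_mono (prod_mono_aux le_rfl (expMeasure_shift_le hε hτ)) hsub
      _ = c • (ν.prod ν).map sub := by
          rw [prod_smul_right_aux _ _ _ hcne, Measure.map_smul]
  have hshiftU : (μ.map U).map (fun x => x - τ) ≤ c • μ.map U := by
    rw [hρU]; exact hshift
  have hshiftV : (μ.map V).map (fun x => x - τ) ≤ c • μ.map V := by
    rw [hρV]; exact hshift
  -- joint law
  have hUV : IndepFun U V μ := by
    have h := hind.indepFun_prodMk_prodMk hX 0 2 1 3
      (by decide) (by decide) (by decide) (by decide)
    exact h.comp hsub hsub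
  have hJ : μ.map (fun ω => (U ω, V ω)) = (μ.map U).prod (μ.map V) :=
    (indepFun_iff_map_prod_eq_prod_map_map hU.aemeasurable hV.aemeasurable).1 hUV
  -- the sets
  set A : Set (ℝ × ℝ) := {p | p.1 + p.2 < -Δv ∧ p.1 < -Δuv ∧ p.2 < -Δe} with hAdef
  set A' : Set (ℝ × ℝ) := {p | p.1 + p.2 < -Δv ∧ p.1 < -Δuv - τ ∧ p.2 < -Δe - τ} with hA'def
  have hA : MeasurableSet A := by
    apply MeasurableSet.inter
    · exact measurableSet_lt (measurable_fst.add measurable_snd) measurable_const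
    · exact (measurableSet_lt measurable_fst measurable_const).inter
        (measurableSet_lt measurable_snd measurable_const)
  have hA' : MeasurableSet A' := by
    apply MeasurableSet.inter
    · exact measurableSet_lt (measurable_fst.add measurable_snd) measurable_const
    · exact (measurableSet_lt measurable_fst measurable_const).inter
        (measurableSet_lt measurable_snd measurable_const)
  have hset1 : {ω | X 0 ω + X 1 ω < X 2 ω + X 3 ω - Δv ∧
      X 0 ω < X 2 ω - Δuv ∧ X 1 ω < X 3 ω - Δe}
      = (fun ω => (U ω, V ω)) ⁻¹' A := by
    ext ω
    simp only [Set.mem_setOf_eq, Set.mem_preimage, hAdef, hUdef, hVdef]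
    constructor
    · rintro ⟨h1, h2, h3⟩; exact ⟨by linarith, by linarith, by linarith⟩
    · rintro ⟨h1, h2, h3⟩; exact ⟨by linarith, by linarith, by linarith⟩
  have hset2 : {ω | X 0 ω + X 1 ω < X 2 ω + X 3 ω - Δv ∧
      X 0 ω < X 2 ω - Δuv - τ ∧ X 1 ω < X 3 ω - Δe - τ}
      = (fun ω => (U ω, V ω)) ⁻¹' A' := by
    ext ω
    simp only [Set.mem_setOf_eq, Set.mem_preimage, hA'def, hUdef, hVdef]
    constructor
    · rintro ⟨h1, h2, h3⟩; exact ⟨by linarith, by linarith, by linarith⟩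
    · rintro ⟨h1, h2, h3⟩; exact ⟨by linarith, by linarith, by linarith⟩
  set T : ℝ × ℝ → ℝ × ℝ := Prod.map (fun x => x - τ) (fun x => x - τ) with hTdef
  have hT : Measurable T := (measurable_sub_const τ).prodMap (measurable_sub_const τ)
  have hAT : A ⊆ T ⁻¹' A' := by
    rintro ⟨u, v⟩ ⟨h1, h2, h3⟩
    exact ⟨by simp [hTdef]; linarith, by simp [hTdef]; linarith, by simp [hTdef]; linarith⟩
  have hW : Measurable (fun ω => (U ω, V ω)) := hU.prodMk hV
  -- the chain of inequalities
  calc μ ({ω | X 0 ω + X 1 ω < X 2 ω + X 3 ω - Δv ∧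
          X 0 ω < X 2 ω - Δuv ∧ X 1 ω < X 3 ω - Δe})
      = ((μ.map U).prod (μ.map V)) A := by
        rw [hset1, ← Measure.map_apply hW hA, hJ]
    _ ≤ ((μ.map U).prod (μ.map V)) (T ⁻¹' A') := measure_mono hAT
    _ = (((μ.map U).prod (μ.map V)).map T) A' := (Measure.map_apply hT hA').symm
    _ = (((μ.map U).map (fun x => x - τ)).prod ((μ.map V).map (fun x => x - τ))) A' := by
        rw [Measure.map_prod_map _ _ (measurable_sub_const τ) (measurable_sub_const τ)]
    _ ≤ ((c • μ.map U).prod (c • μ.map V)) A' :=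
        Measure.le_iff'.1 (prod_mono_aux hshiftU hshiftV) A'
    _ = (c * c) * ((μ.map U).prod (μ.map V)) A' := by
        rw [smul_prod_aux, prod_smul_right_aux _ _ _ hcne, Measure.smul_apply,
          Measure.smul_apply, smul_eq_mul, smul_eq_mul, mul_assoc]
    _ = (c * c) * μ ({ω | X 0 ω + X 1 ω < X 2 ω + X 3 ω - Δv ∧
          X 0 ω < X 2 ω - Δuv - τ ∧ X 1 ω < X 3 ω - Δe - τ}) := by
        rw [hset2, ← Measure.map_apply hW hA', hJ]
    _ ≤ ENNReal.ofReal (Real.exp (4 * τ * ε)) *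
          μ ({ω | X 0 ω + X 1 ω < X 2 ω + X 3 ω - Δv ∧
          X 0 ω < X 2 ω - Δuv - τ ∧ X 1 ω < X 3 ω - Δe - τ}) := by
        apply mul_le_mul_left
        rw [hc, ← ENNReal.ofReal_mul (Real.exp_nonneg _), ← Real.exp_add]
        apply ENNReal.ofReal_le_ofReal
        apply Real.exp_le_exp.2
        nlinarith
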